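/- With α_k, β_k, γ defined as before, the function ρ(ζ_{t_1},...,ζ_{t_K},ζ_d) = γ(ζ_d)·Σ_{k=1}^K α_k(ζ_{t_k}) / (1 + γ(ζ_d)·Σ_{k=1}^K β_k(ζ_{t_k})) is strictly positive, and is strictly decreasing in each ζ_{t_k} and in ζ_d (holding the other variables fixed), over the nonnegative orthant. -/

import Mathlib

open Set

noncomputable section

/-- `γ(ζ_d)` -/
def gammaFun (Pw T Td ζd : ℝ) : ℝ := 1 / (1 + ζd * Pw * T / Td)

/-- `α_k(ζ)` -/
def alphaFun (Pw T Tt Pt Pd ζ : ℝ) : ℝ :=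
  (Pd * Pt * Tt / (1 + ζ * Pw * T / Tt)) / (1 + Pt * Tt / (1 + ζ * Pw * T / Tt))

/-- `β_k(ζ)` -/
def betaFun (Pw T Tt Pt Pd ζ : ℝ) : ℝ :=
  Pd / (1 + Pt * Tt / (1 + ζ * Pw * T / Tt))

/-- The effective SINR `ρ`. -/
def rhoFun (K : ℕ) (Pw T Td : ℝ) (Tt Pt Pd : Fin K → ℝ)
    (ζt : Fin K → ℝ) (ζd : ℝ) : ℝ :=
  gammaFun Pw T Td ζd * (∑ k, alphaFun Pw T (Tt k) (Pt k) (Pd k) (ζt k))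
    / (1 + gammaFun Pw T Td ζd * ∑ k, betaFun Pw T (Tt k) (Pt k) (Pd k) (ζt k))

lemma alphaFun_eq (Pw T Tt Pt Pd ζ : ℝ) (hPw : 0 < Pw) (hT : 0 < T)
    (hTt : 0 < Tt) (hPt : 0 < Pt) (hζ : 0 ≤ ζ) :
    alphaFun Pw T Tt Pt Pd ζ = Pd * Pt * Tt / ((1 + ζ * Pw * T / Tt) + Pt * Tt) := by
  have hu : 0 < 1 + ζ * Pw * T / Tt := by positivity
  have h2 : (0:ℝ) < 1 + Pt * Tt / (1 + ζ * Pw * T / Tt) := by positivity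
  have h3 : (0:ℝ) < (1 + ζ * Pw * T / Tt) + Pt * Tt := by positivity
  unfold alphaFun
  field_simp

lemma betaFun_eq (Pw T Tt Pt Pd ζ : ℝ) (hPw : 0 < Pw) (hT : 0 < T)
    (hTt : 0 < Tt) (hPt : 0 < Pt) (hζ : 0 ≤ ζ) :
    betaFun Pw T Tt Pt Pd ζ = Pd * (1 + ζ * Pw * T / Tt) / ((1 + ζ * Pw * T / Tt) + Pt * Tt) := by
  have hu : 0 < 1 + ζ * Pw * T / Tt := by positivity
  have h2 : (0:ℝ) < 1 + Pt * Tt / (1 + ζ * Pw * T / Tt) := by positivity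
  have h3 : (0:ℝ) < (1 + ζ * Pw * T / Tt) + Pt * Tt := by positivity
  unfold betaFun
  field_simp

lemma alphaFun_pos (Pw T Tt Pt Pd ζ : ℝ) (hPw : 0 < Pw) (hT : 0 < T)
    (hTt : 0 < Tt) (hPt : 0 < Pt) (hPd : 0 < Pd) (hζ : 0 ≤ ζ) :
    0 < alphaFun Pw T Tt Pt Pd ζ := by
  rw [alphaFun_eq Pw T Tt Pt Pd ζ hPw hT hTt hPt hζ]
  positivity

lemma betaFun_pos (Pw T Tt Pt Pd ζ : ℝ) (hPw : 0 < Pw) (hT : 0 < T)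
    (hTt : 0 < Tt) (hPt : 0 < Pt) (hPd : 0 < Pd) (hζ : 0 ≤ ζ) :
    0 < betaFun Pw T Tt Pt Pd ζ := by
  rw [betaFun_eq Pw T Tt Pt Pd ζ hPw hT hTt hPt hζ]
  positivity

lemma alphaFun_lt (Pw T Tt Pt Pd x y : ℝ) (hPw : 0 < Pw) (hT : 0 < T)
    (hTt : 0 < Tt) (hPt : 0 < Pt) (hPd : 0 < Pd) (hx : 0 ≤ x) (hxy : x < y) :
    alphaFun Pw T Tt Pt Pd y < alphaFun Pw T Tt Pt Pd x := by
  have hy : (0:ℝ) ≤ y := le_of_lt (lt_of_le_of_lt hx hxy)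
  rw [alphaFun_eq Pw T Tt Pt Pd x hPw hT hTt hPt hx,
     alphaFun_eq Pw T Tt Pt Pd y hPw hT hTt hPt hy]
  have h3 : (0:ℝ) < (1 + x * Pw * T / Tt) + Pt * Tt := by positivity
  apply div_lt_div_of_pos_left (by positivity) h3
  have : x * Pw * T / Tt < y * Pw * T / Tt := by
    apply div_lt_div_of_pos_right _ hTt
    exact mul_lt_mul_of_pos_right (mul_lt_mul_of_pos_right hxy hPw) hT
  linarith

lemma betaFun_lt (Pw T Tt Pt Pd x y : ℝ) (hPw : 0 < Pw) (hT : 0 < T)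
    (hTt : 0 < Tt) (hPt : 0 < Pt) (hPd : 0 < Pd) (hx : 0 ≤ x) (hxy : x < y) :
    betaFun Pw T Tt Pt Pd x < betaFun Pw T Tt Pt Pd y := by
  have hy : (0:ℝ) ≤ y := le_of_lt (lt_of_le_of_lt hx hxy)
  rw [betaFun_eq Pw T Tt Pt Pd x hPw hT hTt hPt hx,
     betaFun_eq Pw T Tt Pt Pd y hPw hT hTt hPt hy]
  have hux : (0:ℝ) < 1 + x * Pw * T / Tt := by positivity
  have huy : (0:ℝ) < 1 + y * Pw * T / Tt := by positivity
  have h3 : (0:ℝ) < (1 + x * Pw * T / Tt) + Pt * Tt := by positivity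
  have h4 : (0:ℝ) < (1 + y * Pw * T / Tt) + Pt * Tt := by positivity
  rw [div_lt_div_iff₀ h3 h4]
  have huxy : x * Pw * T / Tt < y * Pw * T / Tt := by
    apply div_lt_div_of_pos_right _ hTt
    exact mul_lt_mul_of_pos_right (mul_lt_mul_of_pos_right hxy hPw) hT
  nlinarith [mul_pos (mul_pos hPd (mul_pos hPt hTt)) (sub_pos.mpr huxy)]

lemma gammaFun_pos (Pw T Td ζd : ℝ) (hPw : 0 < Pw) (hT : 0 < T)
    (hTd : 0 < Td) (hζ : 0 ≤ ζd) : 0 < gammaFun Pw T Td ζd := by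
  unfold gammaFun; positivity

lemma sum_update_eq {K : ℕ} (h : Fin K → ℝ → ℝ) (ζ : Fin K → ℝ) (k : Fin K) (z : ℝ) :
    ∑ j, h j (Function.update ζ k z j)
      = h k z + ∑ j ∈ Finset.univ.erase k, h j (ζ j) := by
  rw [← Finset.add_sum_erase _ (fun j => h j (Function.update ζ k z j)) (Finset.mem_univ k)]
  congr 1
  · simp
  · exact Finset.sum_congr rfl fun j hj => by
      rw [Function.update_of_ne (Finset.ne_of_mem_erase hj)]

/-- `ρ` is strictly positive on the nonnegative orthant and strictly decreasing
in each training-jamming variable `ζ_{t_k}` and in the data-jamming variable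
`ζ_d`. -/
theorem rho_pos_and_strictAnti (K : ℕ) (hK : 0 < K) (Pw T Td : ℝ)
    (Tt Pt Pd : Fin K → ℝ)
    (hPw : 0 < Pw) (hT : 0 < T) (hTd : 0 < Td)
    (hTt : ∀ k, 0 < Tt k) (hPt : ∀ k, 0 < Pt k) (hPd : ∀ k, 0 < Pd k) :
    (∀ (ζt : Fin K → ℝ) (ζd : ℝ), (∀ k, 0 ≤ ζt k) → 0 ≤ ζd →
      0 < rhoFun K Pw T Td Tt Pt Pd ζt ζd) ∧
    (∀ (ζt : Fin K → ℝ) (ζd : ℝ), (∀ k, 0 ≤ ζt k) → 0 ≤ ζd →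
      ∀ k : Fin K,
        StrictAntiOn (fun z : ℝ =>
          rhoFun K Pw T Td Tt Pt Pd (Function.update ζt k z) ζd) (Ici 0)) ∧
    (∀ ζt : Fin K → ℝ, (∀ k, 0 ≤ ζt k) →
      StrictAntiOn (fun z : ℝ => rhoFun K Pw T Td Tt Pt Pd ζt z) (Ici 0)) := by
  have hne : (Finset.univ : Finset (Fin K)).Nonempty := by
    simpa [Finset.univ_nonempty_iff] using Fin.pos_iff_nonempty.mp hK
  -- sums of alphas positive, betas positive
  have hSα : ∀ (ζt : Fin K → ℝ), (∀ k, 0 ≤ ζt k) →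
      0 < ∑ k, alphaFun Pw T (Tt k) (Pt k) (Pd k) (ζt k) := fun ζt hζt =>
    Finset.sum_pos (fun k _ => alphaFun_pos _ _ _ _ _ _ hPw hT (hTt k) (hPt k) (hPd k) (hζt k)) hne
  have hSβ : ∀ (ζt : Fin K → ℝ), (∀ k, 0 ≤ ζt k) →
      0 ≤ ∑ k, betaFun Pw T (Tt k) (Pt k) (Pd k) (ζt k) := fun ζt hζt =>
    Finset.sum_nonneg fun k _ =>
      (betaFun_pos _ _ _ _ _ _ hPw hT (hTt k) (hPt k) (hPd k) (hζt k)).le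
  refine ⟨?_, ?_, ?_⟩
  · intro ζt ζd hζt hζd
    have hg := gammaFun_pos Pw T Td ζd hPw hT hTd hζd
    have h1 := hSα ζt hζt
    have h2 := hSβ ζt hζt
    unfold rhoFun
    have hden : 0 < 1 + gammaFun Pw T Td ζd * ∑ k, betaFun Pw T (Tt k) (Pt k) (Pd k) (ζt k) := by
      positivity
    positivity
  · intro ζt ζd hζt hζd k
    intro x hx y hy hxy
    simp only
    have hg := gammaFun_pos Pw T Td ζd hPw hT hTd hζd
    have hx' : (0:ℝ) ≤ x := hx
    have hy' : (0:ℝ) ≤ y := hy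
    have hupd : ∀ z : ℝ, 0 ≤ z → ∀ j, 0 ≤ Function.update ζt k z j := by
      intro z hz j
      rcases eq_or_ne j k with rfl | hne'
      · simpa using hz
      · simpa [Function.update_of_ne hne'] using hζt j
    have hRα : (0:ℝ) ≤ ∑ j ∈ Finset.univ.erase k,
        alphaFun Pw T (Tt j) (Pt j) (Pd j) (ζt j) :=
      Finset.sum_nonneg fun j _ =>
        (alphaFun_pos _ _ _ _ _ _ hPw hT (hTt j) (hPt j) (hPd j) (hζt j)).le
    have hRβ : (0:ℝ) ≤ ∑ j ∈ Finset.univ.erase k,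
        betaFun Pw T (Tt j) (Pt j) (Pd j) (ζt j) :=
      Finset.sum_nonneg fun j _ =>
        (betaFun_pos _ _ _ _ _ _ hPw hT (hTt j) (hPt j) (hPd j) (hζt j)).le
    unfold rhoFun
    set g := gammaFun Pw T Td ζd with hgdef
    rw [sum_update_eq (fun j => alphaFun Pw T (Tt j) (Pt j) (Pd j)) ζt k x,
        sum_update_eq (fun j => alphaFun Pw T (Tt j) (Pt j) (Pd j)) ζt k y,
        sum_update_eq (fun j => betaFun Pw T (Tt j) (Pt j) (Pd j)) ζt k x,
        sum_update_eq (fun j => betaFun Pw T (Tt j) (Pt j) (Pd j)) ζt k y]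
    set Rα := ∑ j ∈ Finset.univ.erase k, alphaFun Pw T (Tt j) (Pt j) (Pd j) (ζt j)
    set Rβ := ∑ j ∈ Finset.univ.erase k, betaFun Pw T (Tt j) (Pt j) (Pd j) (ζt j)
    have hαx := alphaFun_pos Pw T (Tt k) (Pt k) (Pd k) x hPw hT (hTt k) (hPt k) (hPd k) hx'
    have hαy := alphaFun_pos Pw T (Tt k) (Pt k) (Pd k) y hPw hT (hTt k) (hPt k) (hPd k) hy'
    have hβx := betaFun_pos Pw T (Tt k) (Pt k) (Pd k) x hPw hT (hTt k) (hPt k) (hPd k) hx'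
    have hα := alphaFun_lt Pw T (Tt k) (Pt k) (Pd k) x y hPw hT (hTt k) (hPt k) (hPd k) hx' hxy
    have hβ := betaFun_lt Pw T (Tt k) (Pt k) (Pd k) x y hPw hT (hTt k) (hPt k) (hPd k) hx' hxy
    set αx := alphaFun Pw T (Tt k) (Pt k) (Pd k) x
    set αy := alphaFun Pw T (Tt k) (Pt k) (Pd k) y
    set βx := betaFun Pw T (Tt k) (Pt k) (Pd k) x
    set βy := betaFun Pw T (Tt k) (Pt k) (Pd k) y
    have hdx : 0 < 1 + g * (βx + Rβ) := by positivity
    have hdy : 0 < 1 + g * (βy + Rβ) := by nlinarith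
    rw [div_lt_div_iff₀ hdy hdx]
    have hnum : g * (αy + Rα) < g * (αx + Rα) :=
      mul_lt_mul_of_pos_left (by linarith) hg
    have hden' : 1 + g * (βx + Rβ) < 1 + g * (βy + Rβ) := by
      have := mul_lt_mul_of_pos_left (show βx + Rβ < βy + Rβ by linarith) hg
      linarith
    exact mul_lt_mul hnum hden'.le hdx (by positivity)
  · intro ζt hζt
    intro x hx y hy hxy
    have hx' : (0:ℝ) ≤ x := hx
    have hy' : (0:ℝ) ≤ y := hy
    simp only
    have h1 := hSα ζt hζt
    have h2 := hSβ ζt hζt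
    set Sα := ∑ k, alphaFun Pw T (Tt k) (Pt k) (Pd k) (ζt k)
    set Sβ := ∑ k, betaFun Pw T (Tt k) (Pt k) (Pd k) (ζt k)
    have key : ∀ z : ℝ, 0 ≤ z →
        rhoFun K Pw T Td Tt Pt Pd ζt z = Sα / ((1 + z * Pw * T / Td) + Sβ) := by
      intro z hz
      have hD : (0:ℝ) < 1 + z * Pw * T / Td := by positivity
      have hrw : rhoFun K Pw T Td Tt Pt Pd ζt z =
          (1 / (1 + z * Pw * T / Td)) * Sα / (1 + (1 / (1 + z * Pw * T / Td)) * Sβ) := rfl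
      rw [hrw]
      have hden2 : (0:ℝ) < 1 + (1 / (1 + z * Pw * T / Td)) * Sβ := by positivity
      have hD3 : (0:ℝ) < (1 + z * Pw * T / Td) + Sβ := by positivity
      field_simp
    rw [key x hx', key y hy']
    have hc : x * Pw * T / Td < y * Pw * T / Td := by
      apply div_lt_div_of_pos_right _ hTd
      exact mul_lt_mul_of_pos_right (mul_lt_mul_of_pos_right hxy hPw) hT
    have hDx : (0:ℝ) < (1 + x * Pw * T / Td) + Sβ := by positivity
    exact div_lt_div_of_pos_left h1 hDx (by linarith)
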